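/- Let A ∈ B(H), g ∈ ran A, and suppose the Krylov intersection closure(K(A,g)) ∩ A(K(A,g)-perp) = {0}. If f₀ satisfies A f₀ = g and P is the orthogonal projection onto closure(K(A,g)), then P f₀ also satisfies A(P f₀) = g; in particular a Krylov solution exists. -/

import Mathlib

/-- Proposition 2.5: if the Krylov intersection is trivial and `A f₀ = g`, then the
orthogonal projection of `f₀` onto `closure(K(A,g))` also solves the problem; in
particular a Krylov solution exists. -/
theorem stmt8 {H : Type*} [NormedAddCommGroup H] [InnerProductSpace ℂ H]
    [CompleteSpace H] (A : H →L[ℂ] H) (g f₀ : H) (hf₀ : A f₀ = g)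
    (hJ : (((Submodule.span ℂ (Set.range fun k : ℕ => (A ^ k) g)).topologicalClosure : Set H) ∩
            (A '' ((Submodule.span ℂ (Set.range fun k : ℕ => (A ^ k) g))ᗮ : Set H))) = {0}) :
    A (Submodule.orthogonalProjectionOnto
        ((Submodule.span ℂ (Set.range fun k : ℕ => (A ^ k) g)).topologicalClosure) f₀ : H) = g ∧
      ∃ f ∈ (Submodule.span ℂ (Set.range fun k : ℕ => (A ^ k) g)).topologicalClosure,
        A f = g := by
  set K := Submodule.span ℂ (Set.range fun k : ℕ => (A ^ k) g) with hK
  set Kc := K.topologicalClosure with hKc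
  have hgK : g ∈ K := Submodule.subset_span ⟨0, by simp⟩
  have hAK : ∀ x ∈ K, A x ∈ K := by
    intro x hx
    refine Submodule.span_induction ?_ (by simp) (fun a b _ _ ha hb => by
      simpa using K.add_mem ha hb) (fun c a _ ha => by simpa using K.smul_mem c ha) hx
    rintro _ ⟨k, rfl⟩
    exact Submodule.subset_span ⟨k + 1, by simp [pow_succ']⟩
  have hAKc : ∀ x ∈ Kc, A x ∈ Kc := by
    intro x hx
    have := map_mem_closure A.continuous hx (fun y hy => K.le_topologicalClosure (hAK y hy))
    rwa [K.isClosed_topologicalClosure.closure_eq] at this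
  set p : H := (Submodule.orthogonalProjectionOnto Kc f₀ : H)
  have hpKc : p ∈ Kc := (Submodule.orthogonalProjectionOnto Kc f₀).2
  have hperp : f₀ - p ∈ Kᗮ :=
    Submodule.orthogonal_le K.le_topologicalClosure (Submodule.sub_starProjection_mem_orthogonal (K := Kc) f₀)
  have hv : A (f₀ - p) ∈ ((Kc : Set H) ∩ (A '' (Kᗮ : Set H))) := by
    constructor
    · have : A (f₀ - p) = g - A p := by rw [map_sub, hf₀]
      rw [this]
      exact Kc.sub_mem (K.le_topologicalClosure hgK) (hAKc p hpKc)
    · exact ⟨f₀ - p, hperp, rfl⟩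
  rw [hJ] at hv
  have h0 : A (f₀ - p) = 0 := hv
  have hAp : A p = g := by
    have := map_sub A f₀ p
    rw [h0, hf₀] at this
    exact (eq_of_sub_eq_zero this.symm).symm
  exact ⟨hAp, p, hpKc, hAp⟩
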